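/- Every continuous surjection with compact Hausdorff domain and Hausdorff codomain whose pushforward on probability measures is open must itself be open; that is, if P(f) : P(X) → P(Y) is open then f : X → Y is open, where X, Y are compact Hausdorff and f is a continuous surjection. -/

import Mathlib

open MeasureTheory
open scoped ENNReal NNReal

theorem isOpenMap_of_pushforward_isOpenMap
    {X Y : Type*}
    [TopologicalSpace X] [CompactSpace X] [T2Space X] [MeasurableSpace X] [BorelSpace X]
    [TopologicalSpace Y] [T2Space Y] [MeasurableSpace Y] [BorelSpace Y]
    (f : X → Y) (hf : Continuous f) (hsurj : Function.Surjective f)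
    (hPf : IsOpenMap (fun μ : ProbabilityMeasure X =>
      μ.map hf.measurable.aemeasurable)) :
    IsOpenMap f := by
  intro U hU
  rw [isOpen_iff_forall_mem_open]
  rintro y ⟨x, hxU, rfl⟩
  -- Urysohn function: g x = 1, g = 0 on Uᶜ
  obtain ⟨g, hgx, hgU⟩ := CompletelyRegularSpace.exists_BCNN (K := Uᶜ)
    hU.isClosed_compl (Set.notMem_compl_iff.mpr hxU)
  -- W : set of probability measures with positive integral of g
  set W : Set (ProbabilityMeasure X) :=
    (fun μ : ProbabilityMeasure X => μ.toFiniteMeasure.testAgainstNN g) ⁻¹' Set.Ioi 0 with hW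
  have hWopen : IsOpen W :=
    (ProbabilityMeasure.continuous_testAgainstNN_eval g).isOpen_preimage _ isOpen_Ioi
  -- positive g-integral implies positive measure of U
  have key : ∀ μ : ProbabilityMeasure X, μ ∈ W → (μ : Measure X) U ≠ 0 := by
    intro μ hμ hU0
    have hle : (fun z => (g z : ℝ≥0∞)) ≤ U.indicator (fun _ => ((nndist g 0 : ℝ≥0) : ℝ≥0∞)) := by
      intro z
      by_cases hz : z ∈ U
      · simpa [Set.indicator_of_mem hz] using ENNReal.coe_le_coe.mpr (BoundedContinuousFunction.NNReal.upper_bound g z)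
      · simp [Set.indicator_of_notMem hz, hgU z hz]
    have : ∫⁻ z, (g z : ℝ≥0∞) ∂(μ : Measure X) = 0 := by
      refine le_antisymm ?_ zero_le
      calc ∫⁻ z, (g z : ℝ≥0∞) ∂(μ : Measure X)
          ≤ ∫⁻ z, U.indicator (fun _ => ((nndist g 0 : ℝ≥0) : ℝ≥0∞)) z ∂(μ : Measure X) :=
            lintegral_mono hle
        _ = ((nndist g 0 : ℝ≥0) : ℝ≥0∞) * (μ : Measure X) U :=
            lintegral_indicator_const hU.measurableSet _
        _ = 0 := by rw [hU0, mul_zero]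
    have : μ.toFiniteMeasure.testAgainstNN g = 0 := by
      simp [FiniteMeasure.testAgainstNN, this]
    simp only [hW, Set.mem_preimage, Set.mem_Ioi] at hμ
    exact absurd this (ne_of_gt hμ)
  -- δ_x ∈ W
  have hxW : diracProba x ∈ W := by
    simp only [hW, Set.mem_preimage, Set.mem_Ioi]
    have hg_mble : Measurable (fun z => (g z : ℝ≥0∞)) :=
      measurable_coe_nnreal_ennreal_iff.mpr g.continuous.measurable
    have : (diracProba x).toFiniteMeasure.testAgainstNN g = 1 := by
      rw [FiniteMeasure.testAgainstNN, ProbabilityMeasure.toMeasure_comp_toFiniteMeasure_eq_toMeasure]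
      simp [diracProba, lintegral_dirac' _ hg_mble, hgx]
    rw [this]
    exact one_pos
  -- the open neighborhood of f x
  refine ⟨(fun y => diracProba y) ⁻¹'
    ((fun μ : ProbabilityMeasure X => μ.map hf.measurable.aemeasurable) '' W), ?_, ?_, ?_⟩
  · rintro z ⟨μ, hμW, hμz⟩
    -- μ.map f = δ_z ; show z ∈ f '' U
    have hmap : (μ : Measure X).map f = Measure.dirac z := by
      have := congrArg (fun ν : ProbabilityMeasure Y => (ν : Measure Y)) hμz
      simpa [diracProba] using this
    have hfiber : (μ : Measure X) (f ⁻¹' {z}) = 1 := by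
      rw [← Measure.map_apply hf.measurable (measurableSet_singleton z), hmap,
        Measure.dirac_apply_of_mem (Set.mem_singleton z)]
    have hne : (U ∩ f ⁻¹' {z}).Nonempty := by
      rw [Set.nonempty_iff_ne_empty]
      intro hemp
      have hsub : U ⊆ (f ⁻¹' {z})ᶜ := by
        intro u hu hu'
        exact Set.eq_empty_iff_forall_notMem.mp hemp u ⟨hu, hu'⟩
      have hcompl : (μ : Measure X) ((f ⁻¹' {z})ᶜ) = 0 := by
        exact (prob_compl_eq_zero_iff
          (hf.measurable (measurableSet_singleton z))).mpr hfiber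
      exact key μ hμW (le_antisymm (le_trans (measure_mono hsub) hcompl.le) zero_le)
    obtain ⟨u, huU, huz⟩ := hne
    exact ⟨u, huU, huz⟩
  · exact (continuous_diracProba.isOpen_preimage _ (hPf W hWopen))
  · refine Set.mem_preimage.mpr ⟨diracProba x, hxW, ?_⟩
    apply Subtype.ext
    simp only [ProbabilityMeasure.toMeasure_map]
    exact Measure.map_dirac' hf.measurable x
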